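/- Exact factorization of the fundamental solution through the heat kernel: for every Pe > 0, all x, y ∈ ℝ³ and all τ > 0, G(x,y,τ) = G_H(x,y,τ) · exp( (Pe/4)(x₁−y₁)(x₂+y₂) ) · ( 1 + f(x,y,τ) ), where f(x,y,τ) := exp( τ·Pe·[ (x₁−y₁)²/12 − (x₂+y₂)²/4 − τ(x₁−y₁)(x₂+y₂)/12 ] / ( 4(1+τ²/12) ) ) / √(1+τ²/12) − 1. -/
import Mathlib


open Real

/-- `p(x,y,τ)²` for the Smoluchowski shear fundamental solution. -/
noncomputable def psq (x y : EuclideanSpace ℝ (Fin 3)) (τ : ℝ) : ℝ :=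
  (x 0 - y 0 - τ * (x 1 + y 1) / 2) ^ 2 / (1 + τ ^ 2 / 12)
    + (x 1 - y 1) ^ 2 + (x 2 - y 2) ^ 2

/-- Time-domain fundamental solution of the Smoluchowski shear equation with
Péclet number `Pe`. -/
noncomputable def G (Pe : ℝ) (x y : EuclideanSpace ℝ (Fin 3)) (τ : ℝ) : ℝ :=
  (4 * Real.pi * τ) ^ (-(3 : ℝ) / 2) * (1 + τ ^ 2 / 12) ^ (-(1 : ℝ) / 2) *
    Real.exp (-(Pe * psq x y τ) / (4 * τ))

/-- Heat kernel on `ℝ³` with parameter `Pe`. -/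
noncomputable def GH (Pe : ℝ) (x y : EuclideanSpace ℝ (Fin 3)) (τ : ℝ) : ℝ :=
  (4 * Real.pi * τ) ^ (-(3 : ℝ) / 2) * Real.exp (-(Pe * ‖x - y‖ ^ 2) / (4 * τ))

/-- The correction factor `f`. -/
noncomputable def fcorr (Pe : ℝ) (x y : EuclideanSpace ℝ (Fin 3)) (τ : ℝ) : ℝ :=
  Real.exp (τ * Pe *
      ((x 0 - y 0) ^ 2 / 12 - (x 1 + y 1) ^ 2 / 4
        - τ * (x 0 - y 0) * (x 1 + y 1) / 12) / (4 * (1 + τ ^ 2 / 12)))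
    / Real.sqrt (1 + τ ^ 2 / 12) - 1

/-- Exact factorization of the fundamental solution through the heat kernel:
`G(x,y,τ) = G_H(x,y,τ) exp((Pe/4)(x₁−y₁)(x₂+y₂)) (1 + f(x,y,τ))`. -/
theorem smoluchowski_fundamental_solution_factorization
    (Pe : ℝ) (hPe : 0 < Pe) (x y : EuclideanSpace ℝ (Fin 3)) (τ : ℝ) (hτ : 0 < τ) :
    G Pe x y τ
      = GH Pe x y τ * Real.exp (Pe / 4 * (x 0 - y 0) * (x 1 + y 1))
          * (1 + fcorr Pe x y τ) := by
  have hc : (0:ℝ) < 1 + τ ^ 2 / 12 := by positivity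
  have hs : (0:ℝ) < Real.sqrt (1 + τ ^ 2 / 12) := Real.sqrt_pos.mpr hc
  have hnorm : ‖x - y‖ ^ 2 = (x 0 - y 0) ^ 2 + (x 1 - y 1) ^ 2 + (x 2 - y 2) ^ 2 := by
    rw [EuclideanSpace.norm_eq, Real.sq_sqrt (by positivity)]
    simp [Fin.sum_univ_three, sq_abs]
  have hrpow : (1 + τ ^ 2 / 12 : ℝ) ^ (-(1 : ℝ) / 2)
      = (Real.sqrt (1 + τ ^ 2 / 12))⁻¹ := by
    rw [Real.sqrt_eq_rpow, ← Real.rpow_neg hc.le]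
    norm_num
  unfold G GH fcorr psq
  rw [hnorm, hrpow]
  rw [show (1 : ℝ) + (Real.exp (τ * Pe *
      ((x 0 - y 0) ^ 2 / 12 - (x 1 + y 1) ^ 2 / 4
        - τ * (x 0 - y 0) * (x 1 + y 1) / 12) / (4 * (1 + τ ^ 2 / 12)))
    / Real.sqrt (1 + τ ^ 2 / 12) - 1) = Real.exp (τ * Pe *
      ((x 0 - y 0) ^ 2 / 12 - (x 1 + y 1) ^ 2 / 4
        - τ * (x 0 - y 0) * (x 1 + y 1) / 12) / (4 * (1 + τ ^ 2 / 12)))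
    * (Real.sqrt (1 + τ ^ 2 / 12))⁻¹ from by ring]
  have key : Real.exp (-(Pe * ((x 0 - y 0 - τ * (x 1 + y 1) / 2) ^ 2 / (1 + τ ^ 2 / 12)
      + (x 1 - y 1) ^ 2 + (x 2 - y 2) ^ 2)) / (4 * τ))
      = Real.exp (-(Pe * ((x 0 - y 0) ^ 2 + (x 1 - y 1) ^ 2 + (x 2 - y 2) ^ 2)) / (4 * τ))
        * Real.exp (Pe / 4 * (x 0 - y 0) * (x 1 + y 1))
        * Real.exp (τ * Pe * ((x 0 - y 0) ^ 2 / 12 - (x 1 + y 1) ^ 2 / 4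
            - τ * (x 0 - y 0) * (x 1 + y 1) / 12) / (4 * (1 + τ ^ 2 / 12))) := by
    rw [← Real.exp_add, ← Real.exp_add]
    congr 1
    field_simp
    ring
  rw [key]
  ring
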